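/- Let ν_t be the measure on ℝ with density dν_t(e) = ((1 − cos(et))/e²)·(|f(|e|)|²/|1 − e^{−βe}|) de, where f ∈ L²(ℝ₊) with f ∈ Dom(ê) ∩ Dom(ê^{−1/2}) and β > 0. If there exist t₁ < t₂ such that ∫_{t₁}^{t₂} ∫_ℝ e^{2n+2} dν_t(e) dt < ∞, then ∫_{ℝ₊} e^{2n} |f(e)|² de < ∞. -/

import Mathlib

open MeasureTheory Set

/-- Let `dν_t(e) = ((1 − cos(et))/e²)·(|f(|e|)|²/|1 − e^{−βe}|) de`
be the intensity measure of the van Hove model, with `f ∈ L²(ℝ₊)`,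
`f ∈ Dom(ê) ∩ Dom(ê^{−1/2})` and `β > 0`. If there exist `t₁ < t₂` with
`∫_{t₁}^{t₂} ∫_ℝ e^{2n+2} dν_t(e) dt < ∞`, then `∫_{ℝ₊} e^{2n} |f(e)|² de < ∞`. -/
theorem vanHove_time_integrable_moment_implies_UV_regularity
    (f : ℝ → ℂ) (β : ℝ) (hβ : 0 < β) (n : ℕ)
    (hL2 : ∫⁻ e in Ioi (0 : ℝ), ENNReal.ofReal (‖f e‖ ^ 2) < ⊤)
    (hUV : ∫⁻ e in Ioi (0 : ℝ), ENNReal.ofReal (e ^ 2 * ‖f e‖ ^ 2) < ⊤)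
    (hIR : ∫⁻ e in Ioi (0 : ℝ), ENNReal.ofReal (‖f e‖ ^ 2 / e) < ⊤)
    (t₁ t₂ : ℝ) (h12 : t₁ < t₂)
    (hfin : ∫⁻ t in Ioc t₁ t₂, ∫⁻ e : ℝ,
        ENNReal.ofReal (e ^ (2 * n + 2) *
          ((1 - Real.cos (e * t)) / e ^ 2 *
            (‖f (|e|)‖ ^ 2 / |1 - Real.exp (-β * e)|))) < ⊤) :
    ∫⁻ e in Ioi (0 : ℝ), ENNReal.ofReal (e ^ (2 * n) * ‖f e‖ ^ 2) < ⊤ := by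
  set c := t₂ - t₁ with hc_def
  have hc : 0 < c := sub_pos.mpr h12
  set E : ℝ := max 1 (4 / c) with hE_def
  have hE1 : (1:ℝ) ≤ E := le_max_left _ _
  have hE0 : (0:ℝ) < E := lt_of_lt_of_le one_pos hE1
  -- time integral lower bound
  have htime : ∀ e : ℝ, E ≤ e →
      ENNReal.ofReal (c / 2) ≤ ∫⁻ t in Ioc t₁ t₂, ENNReal.ofReal (1 - Real.cos (e * t)) := by
    intro e he
    have he0 : (0:ℝ) < e := lt_of_lt_of_le hE0 he
    have hcont : Continuous fun t : ℝ => 1 - Real.cos (e * t) := by continuity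
    have hnn : ∀ t : ℝ, 0 ≤ 1 - Real.cos (e * t) := fun t => by
      have := Real.cos_le_one (e * t); linarith
    have hint : IntegrableOn (fun t => 1 - Real.cos (e * t)) (Ioc t₁ t₂) :=
      hcont.integrableOn_Ioc
    rw [← MeasureTheory.ofReal_integral_eq_lintegral_ofReal hint
      (Filter.Eventually.of_forall hnn)]
    apply ENNReal.ofReal_le_ofReal
    have hval : ∫ t in Ioc t₁ t₂, (1 - Real.cos (e * t)) =
        c - (Real.sin (e * t₂) - Real.sin (e * t₁)) / e := by
      rw [← intervalIntegral.integral_of_le h12.le]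
      have hderiv : ∀ t ∈ uIcc t₁ t₂,
          HasDerivAt (fun t => t - Real.sin (e * t) / e) (1 - Real.cos (e * t)) t := by
        intro t _
        have h1 : HasDerivAt (fun t : ℝ => Real.sin (e * t)) (Real.cos (e * t) * (e * 1)) t :=
          (Real.hasDerivAt_sin (e * t)).comp t ((hasDerivAt_id t).const_mul e)
        have h2 := (hasDerivAt_id t).sub (h1.div_const e)
        refine h2.congr_deriv ?_
        rw [mul_one, mul_div_cancel_right₀ _ he0.ne']
      rw [intervalIntegral.integral_eq_sub_of_hasDerivAt hderiv
        (hcont.intervalIntegrable _ _)]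
      ring
    rw [hval]
    have hE4 : 4 / c ≤ e := le_trans (le_max_right _ _) he
    have hce : 4 ≤ c * e := by
      rw [div_le_iff₀ hc] at hE4; linarith [hE4]
    have hsin : (Real.sin (e * t₂) - Real.sin (e * t₁)) / e ≤ c / 2 := by
      rw [div_le_iff₀ he0]
      nlinarith [Real.sin_le_one (e * t₂), Real.neg_one_le_sin (e * t₁)]
    linarith
  -- measurable minorant
  obtain ⟨ψ, hψm, hψle, hψeq⟩ := exists_measurable_le_lintegral_eq
    (μ := volume.restrict (Ioi E)) (fun e => ENNReal.ofReal (e ^ (2 * n) * ‖f e‖ ^ 2))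
  have hψtop : ∀ e, ψ e ≠ ⊤ := fun e =>
    ne_top_of_le_ne_top ENNReal.ofReal_ne_top (hψle e)
  -- step 1: const * ∫ψ ≤ double integral
  have h1 : ENNReal.ofReal (c / 2) * ∫⁻ e in Ioi E, ψ e ≤
      ∫⁻ e in Ioi E, ∫⁻ t in Ioc t₁ t₂, ENNReal.ofReal (1 - Real.cos (e * t)) * ψ e := by
    rw [← lintegral_const_mul _ hψm]
    refine lintegral_mono_ae ?_
    rw [ae_restrict_iff' measurableSet_Ioi]
    filter_upwards with e he
    calc ENNReal.ofReal (c / 2) * ψ e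
        ≤ (∫⁻ t in Ioc t₁ t₂, ENNReal.ofReal (1 - Real.cos (e * t))) * ψ e :=
          mul_le_mul_left (htime e (le_of_lt he)) _
      _ = ∫⁻ t in Ioc t₁ t₂, ENNReal.ofReal (1 - Real.cos (e * t)) * ψ e :=
          (lintegral_mul_const' _ _ (hψtop e)).symm
  -- swap
  have hswap : (∫⁻ e in Ioi E, ∫⁻ t in Ioc t₁ t₂, ENNReal.ofReal (1 - Real.cos (e * t)) * ψ e) =
      ∫⁻ t in Ioc t₁ t₂, ∫⁻ e in Ioi E, ENNReal.ofReal (1 - Real.cos (e * t)) * ψ e := by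
    apply lintegral_lintegral_swap
    apply Measurable.aemeasurable
    apply Measurable.mul
    · exact ENNReal.measurable_ofReal.comp
        ((continuous_const.sub (Real.continuous_cos.comp
          (continuous_fst.mul continuous_snd))).measurable)
    · exact hψm.comp measurable_fst
  -- step 2: inner bound
  have h2 : (∫⁻ t in Ioc t₁ t₂, ∫⁻ e in Ioi E, ENNReal.ofReal (1 - Real.cos (e * t)) * ψ e) ≤
      ∫⁻ t in Ioc t₁ t₂, ∫⁻ e : ℝ,
        ENNReal.ofReal (e ^ (2 * n + 2) *
          ((1 - Real.cos (e * t)) / e ^ 2 *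
            (‖f (|e|)‖ ^ 2 / |1 - Real.exp (-β * e)|))) := by
    refine lintegral_mono fun t => ?_
    refine le_trans ?_ (setLIntegral_le_lintegral (Ioi E) _)
    refine lintegral_mono_ae ?_
    rw [ae_restrict_iff' measurableSet_Ioi]
    filter_upwards with e he
    have he0 : (0:ℝ) < e := lt_trans hE0 he
    have hnn : 0 ≤ 1 - Real.cos (e * t) := by
      have := Real.cos_le_one (e * t); linarith
    calc ENNReal.ofReal (1 - Real.cos (e * t)) * ψ e
        ≤ ENNReal.ofReal (1 - Real.cos (e * t)) *
            ENNReal.ofReal (e ^ (2 * n) * ‖f e‖ ^ 2) := mul_le_mul_right (hψle e) _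
      _ = ENNReal.ofReal ((1 - Real.cos (e * t)) * (e ^ (2 * n) * ‖f e‖ ^ 2)) :=
          (ENNReal.ofReal_mul hnn).symm
      _ ≤ _ := by
          apply ENNReal.ofReal_le_ofReal
          have hd0 : 0 < 1 - Real.exp (-β * e) := by
            have : Real.exp (-β * e) < 1 := by
              rw [Real.exp_lt_one_iff]; nlinarith
            linarith
          have hd1 : 1 - Real.exp (-β * e) ≤ 1 := by
            have := Real.exp_pos (-β * e); linarith
          rw [abs_of_pos he0, abs_of_pos hd0]
          have hgen : ∀ A B d : ℝ, d ≠ 0 →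
              e ^ (2 * n + 2) * (A / e ^ 2 * (B / d)) = (A * (e ^ (2 * n) * B)) / d := by
            intro A B d hd
            rw [pow_add]
            field_simp
          rw [hgen _ _ _ hd0.ne']
          exact le_div_self (by positivity) hd0 hd1
  -- finiteness on Ioi E
  have hψfin : ∫⁻ e in Ioi E, ψ e < ⊤ := by
    have hlt : ENNReal.ofReal (c / 2) * ∫⁻ e in Ioi E, ψ e < ⊤ :=
      lt_of_le_of_lt (h1.trans (hswap.le.trans h2)) hfin
    by_contra h
    push_neg at h
    have htop : ∫⁻ e in Ioi E, ψ e = ⊤ := top_le_iff.mp h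
    rw [htop, ENNReal.mul_top
      (by simp only [ne_eq, ENNReal.ofReal_eq_zero, not_le]; linarith)] at hlt
    exact lt_irrefl _ hlt
  have hIoiE : ∫⁻ e in Ioi E, ENNReal.ofReal (e ^ (2 * n) * ‖f e‖ ^ 2) < ⊤ := by
    rw [hψeq]; exact hψfin
  -- the compact part
  have hIocE : ∫⁻ e in Ioc 0 E, ENNReal.ofReal (e ^ (2 * n) * ‖f e‖ ^ 2) < ⊤ := by
    have hb : ∫⁻ e in Ioc 0 E, ENNReal.ofReal (e ^ (2 * n) * ‖f e‖ ^ 2) ≤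
        ∫⁻ e in Ioc 0 E, ENNReal.ofReal (E ^ (2 * n)) * ENNReal.ofReal (‖f e‖ ^ 2) := by
      refine lintegral_mono_ae ?_
      rw [ae_restrict_iff' measurableSet_Ioc]
      filter_upwards with e he
      rw [← ENNReal.ofReal_mul (by positivity)]
      apply ENNReal.ofReal_le_ofReal
      have : e ^ (2 * n) ≤ E ^ (2 * n) := pow_le_pow_left₀ (le_of_lt he.1) he.2 _
      nlinarith [sq_nonneg ‖f e‖]
    calc ∫⁻ e in Ioc 0 E, ENNReal.ofReal (e ^ (2 * n) * ‖f e‖ ^ 2)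
        ≤ ∫⁻ e in Ioc 0 E, ENNReal.ofReal (E ^ (2 * n)) * ENNReal.ofReal (‖f e‖ ^ 2) := hb
      _ = ENNReal.ofReal (E ^ (2 * n)) * ∫⁻ e in Ioc 0 E, ENNReal.ofReal (‖f e‖ ^ 2) :=
          lintegral_const_mul' _ _ ENNReal.ofReal_ne_top
      _ ≤ ENNReal.ofReal (E ^ (2 * n)) * ∫⁻ e in Ioi 0, ENNReal.ofReal (‖f e‖ ^ 2) :=
          mul_le_mul_right (lintegral_mono_set Ioc_subset_Ioi_self) _
      _ < ⊤ := ENNReal.mul_lt_top ENNReal.ofReal_lt_top hL2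
  -- combine
  have hsplit : Ioi (0:ℝ) = Ioc 0 E ∪ Ioi E := (Ioc_union_Ioi_eq_Ioi hE0.le).symm
  rw [hsplit]
  exact lt_of_le_of_lt (lintegral_union_le _ _ _) (ENNReal.add_lt_top.mpr ⟨hIocE, hIoiE⟩)
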